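/- Let (μ_n)_{n∈ℕ} be a sequence in 𝐌 such that the Lorenz functions L_{μ_n} converge pointwise on [0,1] to a function ℓ : [0,1] → ℝ and the means m_{μ_n} converge to some α ∈ ℝ₊. Then: (1) (μ_n) has a weak limit μ_∞, a Borel probability measure on ℝ₊; (2) the mean of μ_∞ satisfies m_{μ_∞} = ℓ(1⁻) · α ≤ α < ∞, where ℓ(1⁻) denotes the left limit of ℓ at 1; (3) if m_{μ_∞} > 0, then for all x ∈ [0,1), ℓ(x) = ℓ(1⁻) · L_{μ_∞}(x). -/

import Mathlib

open MeasureTheory Filter Topology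

noncomputable section

/-- The mean of a measure on `ℝ`. -/
def mMean (μ : Measure ℝ) : ℝ := ∫ x, x ∂μ

/-- `μ ∈ 𝐌`: a Borel probability measure on `ℝ₊` (modelled as a measure on `ℝ` giving no
mass to negative numbers) with finite nonzero mean. -/
def MemM (μ : Measure ℝ) : Prop :=
  IsProbabilityMeasure μ ∧ μ {x | x < 0} = 0 ∧ Integrable id μ ∧ 0 < mMean μ

/-- The cumulative distribution function `F_μ(x) = μ([0,x])`. -/
def cdfR (μ : Measure ℝ) (x : ℝ) : ℝ := (μ (Set.Icc 0 x)).toReal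

/-- The quantile function `Q_μ(p) = inf {x ∈ ℝ₊ : F_μ(x) ≥ p}`. -/
def quant (μ : Measure ℝ) (p : ℝ) : ℝ := sInf {x : ℝ | 0 ≤ x ∧ p ≤ cdfR μ x}

/-- The Lorenz function `L_μ(p) = (∫_0^p Q_μ(t) dt) / m_μ`. -/
def lorenz (μ : Measure ℝ) (p : ℝ) : ℝ := (∫ t in (0:ℝ)..p, quant μ t) / mMean μ

/-- The pseudo-Lorenz function `Λ_μ(p) = (∫_{[0,Q_μ(p)]} u dμ(u)) / m_μ` for `p ∈ [0,1)`,
with `Λ_μ(1) = 1`. -/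
def pseudoLorenz (μ : Measure ℝ) (p : ℝ) : ℝ :=
  if p = 1 then 1 else (∫ u in Set.Icc (0:ℝ) (quant μ p), u ∂μ) / mMean μ

/-- The Gini coefficient `G(μ) = (∫∫ |x-y| d(μ⊗μ)) / (2 m_μ)`. -/
def gini (μ : Measure ℝ) : ℝ := (∫ z : ℝ × ℝ, |z.1 - z.2| ∂(μ.prod μ)) / (2 * mMean μ)

/-- The Hoover coefficient `H(μ) = (∫ |x - m_μ| dμ) / (2 m_μ)`. -/
def hoover (μ : Measure ℝ) : ℝ := (∫ x, |x - mMean μ| ∂μ) / (2 * mMean μ)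

/-- The Wasserstein-1 distance `W₁(μ,ν) = ∫_0^1 |Q_μ - Q_ν|`. -/
def W1 (μ ν : Measure ℝ) : ℝ := ∫ t in (0:ℝ)..1, |quant μ t - quant ν t|

/-- Weak convergence of a sequence of measures: convergence of integrals of all bounded
continuous functions. -/
def WeakCv (μs : ℕ → Measure ℝ) (ν : Measure ℝ) : Prop :=
  ∀ f : ℝ → ℝ, Continuous f → (∃ C : ℝ, ∀ x, |f x| ≤ C) →
    Tendsto (fun n => ∫ x, f x ∂(μs n)) atTop (𝓝 (∫ x, f x ∂ν))

/-- Uniform integrability of a family of measures on `ℝ₊`: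
`sup_i ∫_{(α,∞)} x dμ_i(x) → 0` as `α → +∞`. -/
def UnifInt {ι : Type*} (μs : ι → Measure ℝ) : Prop :=
  ∀ ε > (0:ℝ), ∃ A : ℝ, ∀ α ≥ A, ∀ i, (∫ x in Set.Ioi α, x ∂(μs i)) ≤ ε

end

section LorenzProofAux
open Set

section Aux

variable {μ : Measure ℝ}

lemma quant_nonneg (μ : Measure ℝ) (p : ℝ) : 0 ≤ quant μ p :=
  Real.sInf_nonneg fun _ hx => hx.1

lemma quant_bddBelow (μ : Measure ℝ) (p : ℝ) : BddBelow {x : ℝ | 0 ≤ x ∧ p ≤ cdfR μ x} :=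
  ⟨0, fun _ hx => hx.1⟩

lemma cdfR_nonneg (μ : Measure ℝ) (x : ℝ) : 0 ≤ cdfR μ x := ENNReal.toReal_nonneg

lemma cdfR_mono [IsProbabilityMeasure μ] : Monotone (cdfR μ) := fun x y hxy =>
  ENNReal.toReal_mono (measure_ne_top μ _) (measure_mono (Icc_subset_Icc_right hxy))

lemma cdfR_le_one [IsProbabilityMeasure μ] (x : ℝ) : cdfR μ x ≤ 1 := by
  have : μ (Icc 0 x) ≤ 1 := prob_le_one
  simpa [cdfR] using ENNReal.toReal_mono (by simp) this

lemma quant_S_nonempty [IsProbabilityMeasure μ] (hneg : μ {x | x < 0} = 0) {p : ℝ} (hp : p < 1) :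
    {x : ℝ | 0 ≤ x ∧ p ≤ cdfR μ x}.Nonempty := by
  rcases le_or_gt p 0 with hp0 | hp0
  · exact ⟨0, le_refl 0, hp0.trans (cdfR_nonneg μ 0)⟩
  · have hunion : (⋃ n : ℕ, Icc (0:ℝ) n) = Ici 0 := by
      ext y
      simp only [mem_iUnion, mem_Icc, mem_Ici]
      constructor
      · rintro ⟨n, h1, _⟩; exact h1
      · intro hy; rcases exists_nat_ge y with ⟨n, hn⟩; exact ⟨n, hy, hn⟩
    have hIci : μ (Ici 0) = 1 := by
      have : μ (Ici 0) = μ univ - μ (Iio 0) := by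
        rw [show (Ici (0:ℝ)) = (Iio 0)ᶜ by simp, measure_compl measurableSet_Iio (measure_ne_top μ _)]
      rw [this, show (Iio (0:ℝ)) = {x | x < 0} from rfl, hneg, measure_univ]
      simp
    have hT : Tendsto (fun n : ℕ => μ (Icc (0:ℝ) n)) atTop (𝓝 1) := by
      have := tendsto_measure_iUnion_atTop (μ := μ) (s := fun n : ℕ => Icc (0:ℝ) n)
        (fun n m hnm => Icc_subset_Icc_right (by exact_mod_cast hnm))
      rwa [hunion, hIci] at this
    have hT' : Tendsto (fun n : ℕ => cdfR μ n) atTop (𝓝 1) := by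
      have := (ENNReal.tendsto_toReal (by simp)).comp hT
      exact this
    have : ∀ᶠ n : ℕ in atTop, p < cdfR μ n := hT'.eventually_const_lt hp
    rcases this.exists with ⟨n, hn⟩
    exact ⟨n, Nat.cast_nonneg n, hn.le⟩

lemma cdfR_right_cont [IsProbabilityMeasure μ] {x p : ℝ} (hx : 0 ≤ x)
    (h : ∀ n : ℕ, p ≤ cdfR μ (x + 1 / (n + 1))) : p ≤ cdfR μ x := by
  have hinter : (⋂ n : ℕ, Icc (0:ℝ) (x + 1 / (n + 1))) = Icc 0 x := by
    ext y
    simp only [mem_iInter, mem_Icc]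
    constructor
    · intro hy
      refine ⟨(hy 0).1, ?_⟩
      by_contra hc
      push_neg at hc
      rcases exists_nat_one_div_lt (sub_pos.2 hc) with ⟨n, hn⟩
      have := (hy n).2
      linarith [hn]
    · intro hy n
      have : (0:ℝ) < 1 / (n + 1) := by positivity
      exact ⟨hy.1, hy.2.trans (by linarith)⟩
  have hanti : Antitone fun n : ℕ => Icc (0:ℝ) (x + 1 / (n + 1)) := by
    intro n m hnm
    apply Icc_subset_Icc_right
    have : (1:ℝ) / (m + 1) ≤ 1 / (n + 1) := by
      apply one_div_le_one_div_of_le (by positivity)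
      have : (n:ℝ) ≤ m := Nat.cast_le.2 hnm
      linarith
    linarith
  have hT : Tendsto (fun n : ℕ => μ (Icc (0:ℝ) (x + 1 / (n + 1)))) atTop (𝓝 (μ (Icc 0 x))) := by
    have := tendsto_measure_iInter_atTop (μ := μ)
      (fun n => (measurableSet_Icc).nullMeasurableSet) hanti ⟨0, measure_ne_top μ _⟩
    rwa [hinter] at this
  have hT' : Tendsto (fun n : ℕ => cdfR μ (x + 1 / (n + 1))) atTop (𝓝 (cdfR μ x)) := by
    have := (ENNReal.tendsto_toReal (measure_ne_top μ _)).comp hT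
    exact this
  exact ge_of_tendsto' hT' h

lemma le_cdfR_of_quant_le [IsProbabilityMeasure μ] (hneg : μ {x | x < 0} = 0) {x p : ℝ}
    (hx : 0 ≤ x) (hp : p < 1) (hq : quant μ p ≤ x) : p ≤ cdfR μ x := by
  apply cdfR_right_cont hx
  intro n
  have hlt : sInf {y : ℝ | 0 ≤ y ∧ p ≤ cdfR μ y} < x + 1 / (n + 1) := by
    have : (0:ℝ) < 1 / (n + 1) := by positivity
    calc sInf {y : ℝ | 0 ≤ y ∧ p ≤ cdfR μ y} ≤ x := hq
    _ < x + 1 / (n + 1) := by linarith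
  rcases exists_lt_of_csInf_lt (quant_S_nonempty hneg hp) hlt with ⟨y, hy, hylt⟩
  exact hy.2.trans (cdfR_mono hylt.le)

lemma quant_le_of_le_cdfR {x p : ℝ} (hx : 0 ≤ x) (h : p ≤ cdfR μ x) : quant μ p ≤ x :=
  csInf_le (quant_bddBelow μ p) ⟨hx, h⟩

lemma quant_monoOn [IsProbabilityMeasure μ] (hneg : μ {x | x < 0} = 0) :
    MonotoneOn (quant μ) (Iio 1) := by
  intro p hp q hq hpq
  exact csInf_le_csInf (quant_bddBelow μ p) (quant_S_nonempty hneg hq)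
    (fun x hx => ⟨hx.1, hpq.trans hx.2⟩)

/-- Measurable surrogate for the quantile function. -/
noncomputable def qf (μ : Measure ℝ) : ℝ → ℝ := fun t => if t < 1 then quant μ t else 0

lemma qf_nonneg (μ : Measure ℝ) (t : ℝ) : 0 ≤ qf μ t := by
  unfold qf; split <;> simp [quant_nonneg]

lemma qf_measurable [IsProbabilityMeasure μ] (hneg : μ {x | x < 0} = 0) :
    Measurable (qf μ) := by
  apply measurable_of_Iic
  intro x
  rcases lt_or_ge x 0 with hx | hx
  · have : qf μ ⁻¹' Iic x = ∅ := by
      ext t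
      simp only [mem_preimage, mem_Iic, mem_empty_iff_false, iff_false, not_le]
      exact lt_of_lt_of_le hx (qf_nonneg μ t)
    rw [this]; exact MeasurableSet.empty
  · have : qf μ ⁻¹' Iic x = (Iio 1 ∩ Iic (cdfR μ x)) ∪ Ici 1 := by
      ext t
      simp only [mem_preimage, mem_Iic, qf, mem_union, mem_inter_iff, mem_Iio, mem_Ici]
      rcases lt_or_ge t 1 with ht | ht
      · rw [if_pos ht]
        constructor
        · intro hq; exact Or.inl ⟨ht, le_cdfR_of_quant_le hneg hx ht hq⟩
        · rintro (⟨_, h⟩ | h)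
          · exact quant_le_of_le_cdfR hx h
          · linarith
      · rw [if_neg (not_lt.2 ht)]
        simp [hx, ht, not_lt.2 ht]
    rw [this]
    exact ((measurableSet_Iio.inter measurableSet_Iic).union measurableSet_Ici)

lemma quant_eq_qf_ae (μ : Measure ℝ) :
    quant μ =ᵐ[volume.restrict (Ioo (0:ℝ) 1)] qf μ := by
  filter_upwards [ae_restrict_mem measurableSet_Ioo] with t ht
  simp [qf, ht.2]

instance m0_prob : IsProbabilityMeasure (volume.restrict (Ioo (0:ℝ) 1)) :=
  ⟨by simp [Measure.restrict_apply' measurableSet_Ioo]⟩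

/-- CORE: the pushforward of Lebesgue measure on (0,1) under the quantile function is μ. -/
lemma map_qf [IsProbabilityMeasure μ] (hneg : μ {x | x < 0} = 0) :
    Measure.map (qf μ) (volume.restrict (Ioo (0:ℝ) 1)) = μ := by
  have hqm := qf_measurable (μ := μ) hneg
  haveI : IsProbabilityMeasure (Measure.map (qf μ) (volume.restrict (Ioo (0:ℝ) 1))) :=
    Measure.isProbabilityMeasure_map hqm.aemeasurable
  apply Measure.ext_of_Iic
  intro a
  rw [Measure.map_apply hqm measurableSet_Iic,
    Measure.restrict_apply' measurableSet_Ioo]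
  rcases lt_or_ge a 0 with ha | ha
  · have h1 : qf μ ⁻¹' Iic a = ∅ := by
      ext t
      simp only [mem_preimage, mem_Iic, mem_empty_iff_false, iff_false, not_le]
      exact lt_of_lt_of_le ha (qf_nonneg μ t)
    have h2 : μ (Iic a) = 0 := by
      apply measure_mono_null _ hneg
      intro y hy
      exact lt_of_le_of_lt hy ha
    simp [h1, h2]
  · have hc0 : 0 ≤ cdfR μ a := cdfR_nonneg μ a
    have hc1 : cdfR μ a ≤ 1 := cdfR_le_one a
    have h1 : qf μ ⁻¹' Iic a ∩ Ioo 0 1 = Ioo 0 1 ∩ Iic (cdfR μ a) := by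
      ext t
      simp only [mem_preimage, mem_Iic, qf, mem_inter_iff, mem_Ioo]
      constructor
      · rintro ⟨hq, ht0, ht1⟩
        rw [if_pos ht1] at hq
        exact ⟨⟨ht0, ht1⟩, le_cdfR_of_quant_le hneg ha ht1 hq⟩
      · rintro ⟨⟨ht0, ht1⟩, htc⟩
        rw [if_pos ht1]
        exact ⟨quant_le_of_le_cdfR ha htc, ht0, ht1⟩
    rw [h1]
    have h2 : volume (Ioo (0:ℝ) 1 ∩ Iic (cdfR μ a)) = ENNReal.ofReal (cdfR μ a) := by
      rcases lt_or_eq_of_le hc1 with hlt | heq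
      · have : Ioo (0:ℝ) 1 ∩ Iic (cdfR μ a) = Ioc 0 (cdfR μ a) := by
          ext t
          simp only [mem_inter_iff, mem_Ioo, mem_Iic, mem_Ioc]
          constructor
          · rintro ⟨⟨h1', _⟩, h3⟩; exact ⟨h1', h3⟩
          · rintro ⟨h1', h2'⟩; exact ⟨⟨h1', lt_of_le_of_lt h2' hlt⟩, h2'⟩
        rw [this, Real.volume_Ioc]; simp
      · have : Ioo (0:ℝ) 1 ∩ Iic (cdfR μ a) = Ioo 0 1 := by
          rw [← heq]
          apply inter_eq_left.2
          intro t ht; exact ht.2.le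
        rw [this, Real.volume_Ioo, ← heq]; simp
    rw [h2]
    have h3 : μ (Iic a) = μ (Icc 0 a) := by
      have : Iic a = Icc 0 a ∪ Iio 0 := by
        ext t
        simp only [mem_Iic, mem_union, mem_Icc, mem_Iio]
        constructor
        · intro ht; rcases lt_or_ge t 0 with a | b
          · exact Or.inr a
          · exact Or.inl ⟨b, ht⟩
        · rintro (⟨_, ht⟩ | ht); exact ht; linarith
      have hneg' : μ (Iio 0) = 0 := hneg
      rw [this]
      refine le_antisymm ((measure_union_le _ _).trans ?_) (measure_mono subset_union_left)
      simp [hneg']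
    rw [h3, cdfR, ENNReal.ofReal_toReal (measure_ne_top μ _)]

end Aux

section Aux2

open MeasureTheory Filter Topology Set

variable {μ : Measure ℝ}

/-- An injection-into-ℚ countability criterion. -/
lemma countable_aux {A : Set ℝ} {f g : ℝ → ℝ} (hfg : ∀ t ∈ A, f t < g t)
    (hcross : ∀ t ∈ A, ∀ t' ∈ A, t < t' → g t ≤ f t') : A.Countable := by
  have hex : ∀ t ∈ A, ∃ q : ℚ, f t < (q:ℝ) ∧ (q:ℝ) < g t := fun t ht => exists_rat_btwn (hfg t ht)
  choose! r hr1 hr2 using hex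
  have hinj : Set.InjOn r A := by
    intro t ht t' ht' hqe
    by_contra hne
    rcases lt_or_gt_of_ne hne with hlt | hlt
    · have h1 : (r t : ℝ) < r t' := (hr2 t ht).trans ((hcross t ht t' ht' hlt).trans_lt (hr1 t' ht'))
      rw [hqe] at h1; exact lt_irrefl _ h1
    · have h1 : (r t' : ℝ) < r t := (hr2 t' ht').trans ((hcross t' ht' t ht hlt).trans_lt (hr1 t ht))
      rw [hqe] at h1; exact lt_irrefl _ h1
  have : A ⊆ ⋃ q : ℚ, A ∩ r ⁻¹' {q} := by
    intro t ht; exact mem_iUnion.2 ⟨r t, ht, rfl⟩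
  apply Set.Countable.mono this
  apply Set.countable_iUnion
  intro q
  rcases Set.eq_empty_or_nonempty (A ∩ r ⁻¹' {q}) with he | ⟨t0, ht0⟩
  · simp [he]
  · have : A ∩ r ⁻¹' {q} ⊆ {t0} := by
      intro t ht
      have := hinj ht.1 ht0.1 (by rw [ht.2, ← ht0.2])
      simpa using this
    exact (Set.countable_singleton t0).mono this

lemma integrableOn_quant [IsProbabilityMeasure μ] (hneg : μ {x | x < 0} = 0)
    (hint : Integrable id μ) : IntegrableOn (quant μ) (Ioo (0:ℝ) 1) volume := by
  have h1 : Integrable id (Measure.map (qf μ) (volume.restrict (Ioo (0:ℝ) 1))) := by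
    rw [map_qf hneg]; exact hint
  have h2 : Integrable (qf μ) (volume.restrict (Ioo (0:ℝ) 1)) := by
    rw [integrable_map_measure aestronglyMeasurable_id
      (qf_measurable hneg).aemeasurable] at h1
    exact h1
  exact (integrable_congr (quant_eq_qf_ae μ)).2 h2

lemma mean_eq_integral_quant [IsProbabilityMeasure μ] (hneg : μ {x | x < 0} = 0) :
    mMean μ = ∫ t in Ioo (0:ℝ) 1, quant μ t := by
  have h1 : mMean μ = ∫ x, id x ∂(Measure.map (qf μ) (volume.restrict (Ioo (0:ℝ) 1))) := by
    rw [map_qf hneg]; rfl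
  rw [h1, integral_map (qf_measurable hneg).aemeasurable aestronglyMeasurable_id]
  exact integral_congr_ae (quant_eq_qf_ae μ).symm

lemma aemeasurable_quant [IsProbabilityMeasure μ] (hneg : μ {x | x < 0} = 0) :
    AEMeasurable (quant μ) (volume.restrict (Ioo (0:ℝ) 1)) :=
  (qf_measurable hneg).aemeasurable.congr (quant_eq_qf_ae μ).symm

/-- interval integral over `0..p` for `0 ≤ p < 1`. -/
lemma intervalIntegrable_quant [IsProbabilityMeasure μ] (hneg : μ {x | x < 0} = 0)
    (hint : Integrable id μ) {a b : ℝ} (ha : 0 ≤ a) (hab : a ≤ b) (hb : b < 1) :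
    IntervalIntegrable (quant μ) volume a b := by
  rw [intervalIntegrable_iff_integrableOn_Ioo_of_le hab]
  exact (integrableOn_quant hneg hint).mono_set
    (fun t ht => ⟨lt_of_le_of_lt ha ht.1, ht.2.trans hb⟩)

end Aux2

section Aux3

open Filter Topology Set

/-- Convexity/derivative machinery: if `ψn n → ψ` pointwise on `[0,1)`, where `qn n` is
nonnegative and sandwiched between slopes of `ψn n`, then the right-derivative `Q` of `ψ`
exists as `sInf` of right slopes, is nonnegative and monotone on `(0,1)`, satisfies slope
bounds, and `qn n t → Q t` off a countable set. -/
lemma deriv_machine {ψ : ℝ → ℝ} {ψn : ℕ → ℝ → ℝ} {qn : ℕ → ℝ → ℝ}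
    (hconv : ∀ p, 0 ≤ p → p < 1 → Tendsto (fun n => ψn n p) atTop (𝓝 (ψ p)))
    (hqnn : ∀ n t, 0 ≤ qn n t)
    (hub : ∀ n t u, 0 ≤ t → t < u → u < 1 → (u - t) * qn n t ≤ ψn n u - ψn n t)
    (hlb : ∀ n s t, 0 ≤ s → s < t → t < 1 → ψn n t - ψn n s ≤ (t - s) * qn n t) :
    ∃ Q : ℝ → ℝ,
      (∀ t, t ∈ Ioo (0:ℝ) 1 → 0 ≤ Q t) ∧
      MonotoneOn Q (Ioo (0:ℝ) 1) ∧
      (∀ s t, 0 ≤ s → s < t → t < 1 → (ψ t - ψ s) / (t - s) ≤ Q t) ∧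
      (∀ t u, 0 < t → t < u → u < 1 → Q t ≤ (ψ u - ψ t) / (u - t)) ∧
      (∃ N : Set ℝ, N.Countable ∧ ∀ t, t ∈ Ioo (0:ℝ) 1 → t ∉ N →
        Tendsto (fun n => qn n t) atTop (𝓝 (Q t))) := by
  -- slope inequality for ψ
  have hψs : ∀ s t u, 0 ≤ s → s < t → t < u → u < 1 →
      (ψ t - ψ s) * (u - t) ≤ (ψ u - ψ t) * (t - s) := by
    intro s t u hs hst htu hu1
    have ht1 : t < 1 := htu.trans hu1
    have T1 : Tendsto (fun n => (ψn n t - ψn n s) * (u - t)) atTop (𝓝 ((ψ t - ψ s) * (u - t))) :=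
      ((hconv t (hs.trans hst.le) ht1).sub (hconv s hs (hst.trans ht1))).mul_const _
    have T2 : Tendsto (fun n => (ψn n u - ψn n t) * (t - s)) atTop (𝓝 ((ψ u - ψ t) * (t - s))) :=
      ((hconv u (hs.trans (hst.trans htu).le) hu1).sub (hconv t (hs.trans hst.le) ht1)).mul_const _
    refine le_of_tendsto_of_tendsto' T1 T2 fun n => ?_
    have h1 := hlb n s t hs hst ht1
    have h2 := hub n t u (hs.trans hst.le) htu hu1
    nlinarith [sub_pos.2 hst, sub_pos.2 htu, hqnn n t]
  have hLR : ∀ s t u, 0 ≤ s → s < t → t < u → u < 1 →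
      (ψ t - ψ s) / (t - s) ≤ (ψ u - ψ t) / (u - t) := by
    intro s t u hs hst htu hu1
    rw [div_le_div_iff₀ (by linarith) (by linarith)]
    exact hψs s t u hs hst htu hu1
  have hψm : ∀ p q, 0 ≤ p → p ≤ q → q < 1 → ψ p ≤ ψ q := by
    intro p q hp hpq hq1
    rcases eq_or_lt_of_le hpq with rfl | hlt
    · exact le_refl _
    · refine le_of_tendsto_of_tendsto' (hconv p hp (hlt.trans hq1)) (hconv q (hp.trans hpq) hq1)
        fun n => ?_
      have := hub n p q hp hlt hq1
      nlinarith [hqnn n p, sub_pos.2 hlt]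
  set RS : ℝ → Set ℝ := fun t => (fun u => (ψ u - ψ t) / (u - t)) '' Ioo t 1 with hRS
  set Q : ℝ → ℝ := fun t => sInf (RS t) with hQ
  have hne : ∀ t, t < 1 → (RS t).Nonempty := by
    intro t ht
    exact ⟨_, mem_image_of_mem _ (show (t+1)/2 ∈ Ioo t 1 by constructor <;> linarith)⟩
  have hbdd : ∀ t, 0 < t → t < 1 → BddBelow (RS t) := by
    intro t ht0 ht1
    refine ⟨(ψ t - ψ (t/2)) / (t - t/2), ?_⟩
    rintro r ⟨u, hu, rfl⟩
    exact hLR (t/2) t u (by linarith) (by linarith) hu.1 hu.2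
  have hQle : ∀ t u, 0 < t → t < u → u < 1 → Q t ≤ (ψ u - ψ t) / (u - t) := by
    intro t u ht0 htu hu1
    exact csInf_le (hbdd t ht0 (htu.trans hu1)) (mem_image_of_mem _ ⟨htu, hu1⟩)
  have hleQ : ∀ s t, 0 ≤ s → s < t → t < 1 → (ψ t - ψ s) / (t - s) ≤ Q t := by
    intro s t hs hst ht1
    refine le_csInf (hne t ht1) ?_
    rintro r ⟨u, hu, rfl⟩
    exact hLR s t u hs hst hu.1 hu.2
  have hQnn : ∀ t, t ∈ Ioo (0:ℝ) 1 → 0 ≤ Q t := by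
    rintro t ⟨ht0, ht1⟩
    refine le_csInf (hne t ht1) ?_
    rintro r ⟨u, hu, rfl⟩
    have h1 : ψ t ≤ ψ u := hψm t u ht0.le hu.1.le hu.2
    have h2 : (0:ℝ) < u - t := by linarith [hu.1]
    exact div_nonneg (by linarith) h2.le
  have hQmono : MonotoneOn Q (Ioo (0:ℝ) 1) := by
    rintro t ⟨ht0, ht1⟩ t' ⟨ht0', ht1'⟩ htt'
    rcases eq_or_lt_of_le htt' with rfl | hlt
    · exact le_refl _
    · exact (hQle t t' ht0 hlt ht1').trans (hleQ t t' ht0.le hlt ht1')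
  -- left slopes
  set LS : ℝ → Set ℝ := fun t => (fun s => (ψ t - ψ s) / (t - s)) '' Ioo 0 t with hLS
  have hLSne : ∀ t, 0 < t → (LS t).Nonempty := by
    intro t ht
    exact ⟨_, mem_image_of_mem _ (show t/2 ∈ Ioo 0 t by constructor <;> linarith)⟩
  have hLSbdd : ∀ t, 0 < t → t < 1 → BddAbove (LS t) := by
    intro t ht0 ht1
    refine ⟨(ψ ((t+1)/2) - ψ t) / ((t+1)/2 - t), ?_⟩
    rintro r ⟨s, hs, rfl⟩
    exact hLR s t ((t+1)/2) hs.1.le hs.2 (by linarith) (by linarith)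
  have hLSleQ : ∀ t, 0 < t → t < 1 → sSup (LS t) ≤ Q t := by
    intro t ht0 ht1
    refine csSup_le (hLSne t ht0) ?_
    rintro r ⟨s, hs, rfl⟩
    exact hleQ s t hs.1.le hs.2 ht1
  set N : Set ℝ := {t | t ∈ Ioo (0:ℝ) 1 ∧ sSup (LS t) < Q t} with hN
  have hNc : N.Countable := by
    apply countable_aux (f := fun t => sSup (LS t)) (g := Q)
    · exact fun t ht => ht.2
    · rintro t ⟨⟨ht0, ht1⟩, _⟩ t' ⟨⟨ht0', ht1'⟩, _⟩ hlt
      have h1 : Q t ≤ (ψ t' - ψ t) / (t' - t) := hQle t t' ht0 hlt ht1'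
      have h2 : (ψ t' - ψ t) / (t' - t) ≤ sSup (LS t') :=
        le_csSup (hLSbdd t' ht0' ht1') (mem_image_of_mem _ ⟨ht0, hlt⟩)
      exact h1.trans h2
  refine ⟨Q, hQnn, hQmono, hleQ, hQle, N, hNc, ?_⟩
  rintro t ⟨ht0, ht1⟩ htN
  have hQeq : Q t ≤ sSup (LS t) := by
    by_contra hc
    exact htN ⟨⟨ht0, ht1⟩, lt_of_not_ge hc⟩
  rw [tendsto_order]
  constructor
  · -- lower bound
    intro c hc
    have hc' : c < sSup (LS t) := lt_of_lt_of_le hc hQeq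
    rcases exists_lt_of_lt_csSup (hLSne t ht0) hc' with ⟨r, ⟨s, hs, rfl⟩, hcr⟩
    have Tn : Tendsto (fun n => (ψn n t - ψn n s) / (t - s)) atTop
        (𝓝 ((ψ t - ψ s) / (t - s))) :=
      ((hconv t ht0.le ht1).sub (hconv s hs.1.le (hs.2.trans ht1))).div_const _
    filter_upwards [Tn.eventually (eventually_gt_nhds hcr)] with n hn
    have h1 := hlb n s t hs.1.le hs.2 ht1
    have h2 : (ψn n t - ψn n s) / (t - s) ≤ qn n t := by
      rw [div_le_iff₀ (by linarith [hs.2])]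
      linarith
    exact lt_of_lt_of_le hn h2
  · -- upper bound
    intro c hc
    rcases exists_lt_of_csInf_lt (hne t ht1) (show Q t < c from hc) with ⟨r, ⟨u, hu, rfl⟩, hrc⟩
    have Tn : Tendsto (fun n => (ψn n u - ψn n t) / (u - t)) atTop
        (𝓝 ((ψ u - ψ t) / (u - t))) :=
      ((hconv u (ht0.le.trans hu.1.le) hu.2).sub (hconv t ht0.le ht1)).div_const _
    filter_upwards [Tn.eventually (eventually_lt_nhds hrc)] with n hn
    have h1 := hub n t u ht0.le hu.1 hu.2
    have h2 : qn n t ≤ (ψn n u - ψn n t) / (u - t) := by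
      rw [le_div_iff₀ (by linarith [hu.1])]
      linarith
    exact lt_of_le_of_lt h2 hn

end Aux3

/-- If the Lorenz functions of `μ_n ∈ 𝐌` converge pointwise on `[0,1]`
to `ℓ` and the means converge to `α ∈ ℝ₊`, then the `μ_n` converge weakly to a Borel
probability measure `μ_∞` on `ℝ₊` with mean `ℓ(1⁻)·α ≤ α < ∞`, and if this mean is
positive then `ℓ(x) = ℓ(1⁻)·L_{μ_∞}(x)` for all `x ∈ [0,1)`. -/
theorem weak_limit_of_lorenz_pointwise_and_mean (μs : ℕ → Measure ℝ)
    (h : ∀ n, MemM (μs n)) (ℓ : ℝ → ℝ) (α : ℝ) (hα : 0 ≤ α)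
    (hL : ∀ x ∈ Set.Icc (0:ℝ) 1, Tendsto (fun n => lorenz (μs n) x) atTop (𝓝 (ℓ x)))
    (hm : Tendsto (fun n => mMean (μs n)) atTop (𝓝 α)) :
    ∃ μ' : Measure ℝ, IsProbabilityMeasure μ' ∧ μ' {x | x < 0} = 0 ∧ Integrable id μ' ∧
      WeakCv μs μ' ∧
      mMean μ' = Function.leftLim ℓ 1 * α ∧ Function.leftLim ℓ 1 * α ≤ α ∧
      (0 < mMean μ' → ∀ x ∈ Set.Ico (0:ℝ) 1, ℓ x = Function.leftLim ℓ 1 * lorenz μ' x) := by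
  classical
  have hprob : ∀ n, IsProbabilityMeasure (μs n) := fun n => (h n).1
  have hneg : ∀ n, (μs n) {x | x < 0} = 0 := fun n => (h n).2.1
  have hid : ∀ n, Integrable id (μs n) := fun n => (h n).2.2.1
  have hmpos : ∀ n, 0 < mMean (μs n) := fun n => (h n).2.2.2
  set m0 : Measure ℝ := volume.restrict (Set.Ioo 0 1) with hm0
  have Qmono : ∀ n, MonotoneOn (quant (μs n)) (Set.Iio 1) := fun n => by
    haveI := hprob n; exact quant_monoOn (hneg n)
  have QInt : ∀ n, IntegrableOn (quant (μs n)) (Set.Ioo 0 1) volume := fun n => by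
    haveI := hprob n; exact integrableOn_quant (hneg n) (hid n)
  have QIi : ∀ (n : ℕ) {a b : ℝ}, 0 ≤ a → a ≤ b → b < 1 →
      IntervalIntegrable (quant (μs n)) volume a b := by
    intro n a b ha hab hb
    haveI := hprob n; exact intervalIntegrable_quant (hneg n) (hid n) ha hab hb
  have Qae : ∀ n, AEMeasurable (quant (μs n)) m0 := fun n => by
    haveI := hprob n; exact aemeasurable_quant (hneg n)
  have hmean : ∀ n, mMean (μs n) = ∫ t in Set.Ioo (0:ℝ) 1, quant (μs n) t := fun n => by
    haveI := hprob n; exact mean_eq_integral_quant (hneg n)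
  set In : ℕ → ℝ → ℝ := fun n p => ∫ t in (0:ℝ)..p, quant (μs n) t with hIn
  have hIn_sub : ∀ n (a b : ℝ), 0 ≤ a → a ≤ b → b < 1 →
      In n b - In n a = ∫ t in a..b, quant (μs n) t := by
    intro n a b ha hab hb
    exact intervalIntegral.integral_interval_sub_left
      (QIi n (le_refl 0) (ha.trans hab) hb) (QIi n (le_refl 0) ha (lt_of_le_of_lt hab hb))
  set ψ : ℝ → ℝ := fun p => α * ℓ p with hψdef
  have hψn : ∀ p, 0 ≤ p → p < 1 → Tendsto (fun n => In n p) atTop (𝓝 (ψ p)) := by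
    intro p hp hp1
    have he : ∀ n, In n p = mMean (μs n) * lorenz (μs n) p := by
      intro n
      have hne := (hmpos n).ne'
      rw [lorenz]
      field_simp
      rfl
    exact Tendsto.congr (fun n => (he n).symm) (hm.mul (hL p ⟨hp, hp1.le⟩))
  have hqnn : ∀ n t, 0 ≤ quant (μs n) t := fun n t => quant_nonneg _ t
  have hub : ∀ n (t u : ℝ), 0 ≤ t → t < u → u < 1 →
      (u - t) * quant (μs n) t ≤ In n u - In n t := by
    intro n t u ht htu hu1
    rw [hIn_sub n t u ht htu.le hu1]
    have hmono : ∫ y in t..u, quant (μs n) t ≤ ∫ y in t..u, quant (μs n) y := by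
      apply intervalIntegral.integral_mono_on htu.le intervalIntegrable_const
        (QIi n ht htu.le hu1)
      intro y hy
      exact Qmono n (show t ∈ Set.Iio 1 by exact lt_of_lt_of_le htu (le_of_lt hu1) |>.trans_le (le_refl 1) |> fun _ => (htu.trans hu1)) (show y ∈ Set.Iio 1 from lt_of_le_of_lt hy.2 hu1) hy.1
    rw [intervalIntegral.integral_const] at hmono
    simpa [smul_eq_mul] using hmono
  have hlb : ∀ n (s t : ℝ), 0 ≤ s → s < t → t < 1 →
      In n t - In n s ≤ (t - s) * quant (μs n) t := by
    intro n s t hs hst ht1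
    rw [hIn_sub n s t hs hst.le ht1]
    have hmono : ∫ y in s..t, quant (μs n) y ≤ ∫ y in s..t, quant (μs n) t := by
      apply intervalIntegral.integral_mono_on hst.le (QIi n hs hst.le ht1)
        intervalIntegrable_const
      intro y hy
      exact Qmono n (show y ∈ Set.Iio 1 from lt_of_le_of_lt hy.2 ht1) (show t ∈ Set.Iio 1 from ht1) hy.2
    rw [intervalIntegral.integral_const] at hmono
    simpa [smul_eq_mul] using hmono
  obtain ⟨Q, hQnn, hQmono, hleQ, hQle, N, hNc, hNconv⟩ :=
    deriv_machine (ψ := ψ) hψn hqnn hub hlb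
  have hae : ∀ᵐ t ∂m0, Tendsto (fun n => quant (μs n) t) atTop (𝓝 (Q t)) := by
    have h1 : m0 N = 0 := by
      rw [hm0, Measure.restrict_apply' measurableSet_Ioo]
      exact measure_mono_null Set.inter_subset_left (hNc.measure_zero _)
    have h2 : ∀ᵐ t ∂m0, t ∉ N := by
      rw [ae_iff]
      have he : {t | ¬ t ∉ N} = N := by ext t; simp
      rwa [he]
    filter_upwards [h2, ae_restrict_mem measurableSet_Ioo] with t h2' ht
    exact hNconv t ht h2'
  have hQae : AEMeasurable Q m0 := aemeasurable_of_tendsto_metrizable_ae atTop Qae hae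
  set μ' := Measure.map Q m0 with hμ'def
  haveI hμ'prob : IsProbabilityMeasure μ' := Measure.isProbabilityMeasure_map hQae
  have hμ'neg : μ' {x | x < 0} = 0 := by
    rw [hμ'def, show {x : ℝ | x < 0} = Set.Iio 0 from rfl,
      Measure.map_apply_of_aemeasurable hQae measurableSet_Iio, hm0,
      Measure.restrict_apply' measurableSet_Ioo]
    have : Q ⁻¹' Set.Iio 0 ∩ Set.Ioo 0 1 = ∅ := by
      ext t
      simp only [Set.mem_inter_iff, Set.mem_preimage, Set.mem_Iio, Set.mem_empty_iff_false,
        iff_false, not_and]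
      intro hq ht
      exact absurd hq (not_lt.2 (hQnn t ht))
    rw [this]; simp
  -- lintegral bound and integrability of Q
  have hof : ∀ n, ∫⁻ t, ENNReal.ofReal (quant (μs n) t) ∂m0 = ENNReal.ofReal (mMean (μs n)) := by
    intro n
    rw [hmean n]
    exact (ofReal_integral_eq_lintegral_ofReal (QInt n)
      (Filter.Eventually.of_forall fun t => hqnn n t)).symm
  have hQlin : ∫⁻ t, ENNReal.ofReal (Q t) ∂m0 ≤ ENNReal.ofReal α := by
    have hlim2 : (fun t => ENNReal.ofReal (Q t)) =ᵐ[m0]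
        (fun t => liminf (fun n => ENNReal.ofReal (quant (μs n) t)) atTop) := by
      filter_upwards [hae] with t ht
      exact ((ENNReal.tendsto_ofReal ht).liminf_eq).symm
    calc ∫⁻ t, ENNReal.ofReal (Q t) ∂m0
        = ∫⁻ t, liminf (fun n => ENNReal.ofReal (quant (μs n) t)) atTop ∂m0 :=
          lintegral_congr_ae hlim2
      _ ≤ liminf (fun n => ∫⁻ t, ENNReal.ofReal (quant (μs n) t) ∂m0) atTop :=
          lintegral_liminf_le' (fun n => (Qae n).ennreal_ofReal)
      _ = liminf (fun n => ENNReal.ofReal (mMean (μs n))) atTop := by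
          congr 1; funext n; exact hof n
      _ = ENNReal.ofReal α := (ENNReal.tendsto_ofReal hm).liminf_eq
  have hQm0nn : ∀ᵐ t ∂m0, 0 ≤ Q t := by
    filter_upwards [ae_restrict_mem measurableSet_Ioo] with t ht using hQnn t ht
  have hQint : Integrable Q m0 := by
    refine ⟨hQae.aestronglyMeasurable, ?_⟩
    rw [hasFiniteIntegral_iff_ofReal hQm0nn]
    exact lt_of_le_of_lt hQlin ENNReal.ofReal_lt_top
  -- integral identity on compact subintervals via dominated convergence
  have hIcc : ∀ a b : ℝ, 0 < a → a ≤ b → b < 1 → ∫ t in Set.Icc a b, Q t = ψ b - ψ a := by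
    intro a b ha hab hb1
    have hb0 : 0 < b := lt_of_lt_of_le ha hab
    set u0 : ℝ := (b+1)/2 with hu0
    have hbu : b < u0 := by rw [hu0]; linarith
    have hu1 : u0 < 1 := by rw [hu0]; linarith
    set C : ℝ := (ψ u0 - ψ b) / (u0 - b) + 1 with hC
    have hTn : Tendsto (fun n => (In n u0 - In n b) / (u0 - b)) atTop
        (𝓝 ((ψ u0 - ψ b) / (u0 - b))) :=
      ((hψn u0 (by linarith) hu1).sub (hψn b hb0.le hb1)).div_const _
    have hev : ∀ᶠ n in atTop, ∀ t ∈ Set.Icc a b, ‖quant (μs n) t‖ ≤ C := by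
      filter_upwards [hTn.eventually (eventually_lt_nhds
        (show (ψ u0 - ψ b) / (u0 - b) < C by rw [hC]; linarith))] with n hn t ht
      have h1 : quant (μs n) t ≤ quant (μs n) b :=
        Qmono n (show t ∈ Set.Iio 1 from lt_of_le_of_lt ht.2 hb1)
          (show b ∈ Set.Iio 1 from hb1) ht.2
      have h2 : quant (μs n) b ≤ (In n u0 - In n b) / (u0 - b) := by
        rw [le_div_iff₀ (by linarith)]
        have := hub n b u0 hb0.le hbu hu1
        linarith
      rw [Real.norm_eq_abs, abs_of_nonneg (hqnn n t)]
      exact le_trans h1 (le_trans h2 hn.le)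
    obtain ⟨Nb, hNb⟩ := eventually_atTop.1 hev
    have hsub : Set.Icc a b ⊆ Set.Ioo 0 1 := fun t ht => ⟨lt_of_lt_of_le ha ht.1, lt_of_le_of_lt ht.2 hb1⟩
    have hle : volume.restrict (Set.Icc a b) ≤ m0 := by
      rw [hm0]; exact Measure.restrict_mono hsub le_rfl
    have hDC : Tendsto (fun k => ∫ t in Set.Icc a b, quant (μs (k + Nb)) t) atTop
        (𝓝 (∫ t in Set.Icc a b, Q t)) := by
      apply tendsto_integral_of_dominated_convergence (bound := fun _ => C)
      · exact fun k => ((Qae (k + Nb)).mono_measure hle).aestronglyMeasurable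
      · exact integrable_const C
      · intro k
        exact (ae_restrict_iff' measurableSet_Icc).2
          (Filter.Eventually.of_forall fun t ht => hNb (k + Nb) (Nat.le_add_left _ _) t ht)
      · have hN0 : volume.restrict (Set.Icc a b) N = 0 := by
          rw [Measure.restrict_apply' measurableSet_Icc]
          exact measure_mono_null Set.inter_subset_left (hNc.measure_zero _)
        have h2 : ∀ᵐ t ∂(volume.restrict (Set.Icc a b)), t ∉ N := by
          rw [ae_iff]
          have he : {t | ¬ t ∉ N} = N := by ext t; simp
          rwa [he]
        filter_upwards [h2, ae_restrict_mem measurableSet_Icc] with t h2' ht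
        exact (hNconv t (hsub ht) h2').comp (tendsto_add_atTop_nat Nb)
    have hlim1 : Tendsto (fun k => ∫ t in Set.Icc a b, quant (μs (k + Nb)) t) atTop
        (𝓝 (ψ b - ψ a)) := by
      have heq : ∀ n, ∫ t in Set.Icc a b, quant (μs n) t = In n b - In n a := by
        intro n
        rw [hIn_sub n a b ha.le hab hb1, MeasureTheory.integral_Icc_eq_integral_Ioc,
          ← intervalIntegral.integral_of_le hab]
      have hT : Tendsto (fun n => In n b - In n a) atTop (𝓝 (ψ b - ψ a)) :=
        (hψn b hb0.le hb1).sub (hψn a ha.le (lt_of_le_of_lt hab hb1))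
      exact Tendsto.congr (fun k => (heq _).symm) (hT.comp (tendsto_add_atTop_nat Nb))
    exact tendsto_nhds_unique hDC hlim1
  -- ψ is nonnegative and ψ(0+) = 0
  have hIn_nonneg : ∀ n (p : ℝ), 0 ≤ p → 0 ≤ In n p := by
    intro n p hp
    exact intervalIntegral.integral_nonneg hp (fun t _ => hqnn n t)
  have hψnn : ∀ p : ℝ, 0 ≤ p → p < 1 → 0 ≤ ψ p := by
    intro p hp hp1
    exact ge_of_tendsto' (hψn p hp hp1) (fun n => hIn_nonneg n p hp)
  -- the key identity on (0, b)
  have hIoo0 : ∀ b : ℝ, 0 < b → b < 1 → ∫ t in Set.Ioo (0:ℝ) b, Q t = ψ b := by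
    intro b hb0 hb1
    set s : ℕ → Set ℝ := fun k => Set.Ioo (b / (k+2)) b with hs
    have hsm : ∀ k, MeasurableSet (s k) := fun k => measurableSet_Ioo
    have hsmono : Monotone s := by
      intro k m hkm
      apply Set.Ioo_subset_Ioo_left
      apply div_le_div_of_nonneg_left hb0.le (by positivity)
      have : (k:ℝ) ≤ m := Nat.cast_le.2 hkm
      linarith
    have hsu : (⋃ k, s k) = Set.Ioo 0 b := by
      ext t
      simp only [hs, Set.mem_iUnion, Set.mem_Ioo]
      constructor
      · rintro ⟨k, h1, h2⟩
        exact ⟨lt_trans (by positivity) h1, h2⟩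
      · rintro ⟨ht0, htb⟩
        obtain ⟨k, hk⟩ := exists_nat_gt (b / t)
        refine ⟨k, ?_, htb⟩
        have h3 : (b/t) * t < ((k:ℝ)+2) * t := by
          apply mul_lt_mul_of_pos_right (by linarith) ht0
        rw [div_mul_cancel₀ _ (ne_of_gt ht0)] at h3
        rw [div_lt_iff₀ (by positivity)]
        linarith
    have hint' : IntegrableOn Q (Set.Ioo 0 b) volume :=
      (show IntegrableOn Q (Set.Ioo 0 1) volume from hQint).mono_set
        (Set.Ioo_subset_Ioo_right hb1.le)
    have hT := tendsto_setIntegral_of_monotone hsm hsmono (by rw [hsu]; exact hint')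
    rw [hsu] at hT
    have hval : ∀ k : ℕ, ∫ t in s k, Q t = ψ b - ψ (b/(k+2)) := by
      intro k
      have hak : (0:ℝ) < b/(k+2) := by positivity
      have hakb : b/(k+2) < b := by
        apply div_lt_self hb0
        have : (0:ℝ) ≤ k := Nat.cast_nonneg k
        linarith
      have : ∫ t in s k, Q t = ∫ t in Set.Icc (b/(k+2)) b, Q t := by
        rw [MeasureTheory.integral_Icc_eq_integral_Ioc, MeasureTheory.integral_Ioc_eq_integral_Ioo]
      rw [this, hIcc _ b hak hakb.le hb1]
    have hψ0 : Tendsto (fun k : ℕ => ψ (b/(k+2))) atTop (𝓝 0) := by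
      have hbound : ∀ a : ℝ, 0 < a → a < b → (b - a) * ψ a ≤ a * ψ b := by
        intro a ha0 hab
        have T1 : Tendsto (fun n => (b - a) * In n a) atTop (𝓝 ((b - a) * ψ a)) :=
          (hψn a ha0.le (hab.trans hb1)).const_mul _
        have T2 : Tendsto (fun n => a * In n b) atTop (𝓝 (a * ψ b)) :=
          (hψn b hb0.le hb1).const_mul _
        refine le_of_tendsto_of_tendsto' T1 T2 fun n => ?_
        have h1 : In n a - In n 0 ≤ (a - 0) * quant (μs n) a :=
          hlb n 0 a (le_refl 0) ha0 (hab.trans hb1)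
        have h2 : (b - a) * quant (μs n) a ≤ In n b - In n a := hub n a b ha0.le hab hb1
        have h3 : In n 0 = 0 := intervalIntegral.integral_same
        have h4 := hIn_nonneg n a ha0.le
        nlinarith [hqnn n a]
      have hup : ∀ k : ℕ, ψ (b/(k+2)) ≤ (b/(k+2)) * (ψ b / (b/2)) := by
        intro k
        have hak : (0:ℝ) < b/(k+2) := by positivity
        have hakb2 : b/(k+2) ≤ b/2 := by
          apply div_le_div_of_nonneg_left hb0.le (by norm_num)
          have : (0:ℝ) ≤ k := Nat.cast_nonneg k
          linarith
        have hakb : b/(k+2) < b := by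
          apply div_lt_self hb0
          have : (0:ℝ) ≤ k := Nat.cast_nonneg k
          linarith
        have h1 := hbound (b/(k+2)) hak hakb
        have h2 : (0:ℝ) < b/2 := by linarith
        have h3 : b - b/(k+2) ≥ b/2 := by linarith
        have h4 : 0 ≤ ψ (b/(k+2)) := hψnn _ hak.le (hakb.trans hb1)
        have h5 : ψ (b/(k+2)) ≤ (b/(k+2)) * ψ b / (b/2) := by
          rw [le_div_iff₀ h2]
          nlinarith
        simpa [mul_div_assoc] using h5
      have hto : Tendsto (fun k : ℕ => b/((k:ℝ)+2)) atTop (𝓝 0) := by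
        apply Tendsto.div_atTop (tendsto_const_nhds)
        exact tendsto_atTop_add_const_right atTop 2 tendsto_natCast_atTop_atTop
      apply squeeze_zero
      · intro k
        have hak : (0:ℝ) < b/(k+2) := by positivity
        have hakb : b/(k+2) < b := by
          apply div_lt_self hb0
          have : (0:ℝ) ≤ k := Nat.cast_nonneg k
          linarith
        exact hψnn _ hak.le (hakb.trans hb1)
      · exact hup
      · simpa using hto.mul_const (ψ b / (b/2))
    have hT2 : Tendsto (fun k => ∫ t in s k, Q t) atTop (𝓝 (ψ b)) := by
      simp only [hval]
      have h6 := (tendsto_const_nhds (x := ψ b) (f := atTop (α := ℕ))).sub hψ0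
      simpa using h6
    exact tendsto_nhds_unique hT hT2
  -- monotonicity and bounds for ℓ
  have hlorenz_eq : ∀ n p, lorenz (μs n) p = In n p / mMean (μs n) := fun n p => rfl
  have hlmono : MonotoneOn ℓ (Set.Ioo 0 1) := by
    rintro p ⟨hp0, hp1⟩ q ⟨hq0, hq1⟩ hpq
    refine le_of_tendsto_of_tendsto' (hL p ⟨hp0.le, hp1.le⟩) (hL q ⟨hq0.le, hq1.le⟩) fun n => ?_
    have hmn := hmpos n
    rw [hlorenz_eq, hlorenz_eq]
    have hIpq : In n p ≤ In n q := by
      have h1 : In n q - In n p = ∫ t in p..q, quant (μs n) t := hIn_sub n p q hp0.le hpq hq1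
      have h2 : 0 ≤ ∫ t in p..q, quant (μs n) t :=
        intervalIntegral.integral_nonneg hpq (fun t _ => hqnn n t)
      linarith
    gcongr
  have hlle1 : ∀ p : ℝ, 0 ≤ p → p < 1 → ℓ p ≤ 1 := by
    intro p hp hp1
    refine le_of_tendsto' (hL p ⟨hp, hp1.le⟩) fun n => ?_
    have hmn := hmpos n
    rw [hlorenz_eq, div_le_one hmn]
    have h2 : In n p = ∫ t in Set.Ioc 0 p, quant (μs n) t := intervalIntegral.integral_of_le hp
    rw [h2, hmean n]
    exact setIntegral_mono_set (QInt n) (Filter.Eventually.of_forall fun t => hqnn n t)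
      (HasSubset.Subset.eventuallyLE fun t ht => ⟨ht.1, lt_of_le_of_lt ht.2 hp1⟩)
  have hlnn : ∀ p : ℝ, 0 ≤ p → p < 1 → 0 ≤ ℓ p := by
    intro p hp hp1
    refine ge_of_tendsto' (hL p ⟨hp, hp1.le⟩) fun n => ?_
    rw [hlorenz_eq]
    exact div_nonneg (hIn_nonneg n p hp) (hmpos n).le
  have hl0 : ℓ 0 = 0 := by
    have h0 : Tendsto (fun n => lorenz (μs n) 0) atTop (𝓝 0) := by
      have he : ∀ n, lorenz (μs n) 0 = 0 := fun n => by
        rw [hlorenz_eq]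
        simp [hIn, intervalIntegral.integral_same]
      exact Tendsto.congr (fun n => (he n).symm) tendsto_const_nhds
    exact tendsto_nhds_unique (hL 0 ⟨le_rfl, zero_le_one⟩) h0
  set SL : ℝ := sSup (ℓ '' Set.Ioo 0 1) with hSLdef
  have hSLbdd : BddAbove (ℓ '' Set.Ioo 0 1) :=
    ⟨1, by rintro r ⟨p, hp, rfl⟩; exact hlle1 p hp.1.le hp.2⟩
  have hhalf : (1:ℝ)/2 ∈ Set.Ioo (0:ℝ) 1 := by norm_num
  have hSLne : (ℓ '' Set.Ioo 0 1).Nonempty := ⟨ℓ (1/2), Set.mem_image_of_mem _ hhalf⟩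
  have hSLle1 : SL ≤ 1 := csSup_le hSLne (by rintro r ⟨p, hp, rfl⟩; exact hlle1 p hp.1.le hp.2)
  have hSLnn : 0 ≤ SL :=
    le_trans (hlnn (1/2) (by norm_num) (by norm_num)) (le_csSup hSLbdd (Set.mem_image_of_mem _ hhalf))
  have htendL : Tendsto ℓ (𝓝[<] (1:ℝ)) (𝓝 SL) :=
    MonotoneOn.tendsto_nhdsWithin_Ioo_left ⟨1/2, hhalf⟩ hlmono hSLbdd
  have hleft : Function.leftLim ℓ 1 = SL :=
    leftLim_eq_of_tendsto htendL
  -- full integral over (0,1)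
  have hfull : ∫ t, Q t ∂m0 = α * SL := by
    set s : ℕ → Set ℝ := fun k => Set.Ioo (0:ℝ) (1 - 1/(k+2)) with hsdef
    have hbk0 : ∀ k : ℕ, (0:ℝ) < 1 - 1/(k+2) := by
      intro k
      have h1 : (1:ℝ)/(k+2) ≤ 1/2 := by
        apply div_le_div_of_nonneg_left zero_le_one (by norm_num)
        have : (0:ℝ) ≤ k := Nat.cast_nonneg k
        linarith
      linarith
    have hbk1 : ∀ k : ℕ, (1:ℝ) - 1/(k+2) < 1 := by
      intro k
      have : (0:ℝ) < 1/(k+2) := by positivity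
      linarith
    have hsm : ∀ k, MeasurableSet (s k) := fun k => measurableSet_Ioo
    have hsmono : Monotone s := by
      intro k m hkm
      apply Set.Ioo_subset_Ioo_right
      have h1 : (1:ℝ)/(m+2) ≤ 1/(k+2) := by
        apply div_le_div_of_nonneg_left zero_le_one (by positivity)
        have : (k:ℝ) ≤ m := Nat.cast_le.2 hkm
        linarith
      linarith
    have hsu : (⋃ k, s k) = Set.Ioo 0 1 := by
      ext t
      simp only [hsdef, Set.mem_iUnion, Set.mem_Ioo]
      constructor
      · rintro ⟨k, h1, h2⟩
        exact ⟨h1, h2.trans (hbk1 k)⟩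
      · rintro ⟨ht0, ht1⟩
        obtain ⟨k, hk⟩ := exists_nat_one_div_lt (show (0:ℝ) < 1 - t by linarith)
        refine ⟨k, ht0, ?_⟩
        have h1 : (1:ℝ)/(k+2) ≤ 1/(k+1) := by
          apply div_le_div_of_nonneg_left zero_le_one (by positivity)
          linarith
        linarith
    have hT := tendsto_setIntegral_of_monotone hsm hsmono
      (show IntegrableOn Q (⋃ k, s k) volume by rw [hsu]; exact hQint)
    rw [hsu] at hT
    have hval : ∀ k : ℕ, ∫ t in s k, Q t = α * ℓ (1 - 1/(k+2)) := by
      intro k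
      rw [show s k = Set.Ioo (0:ℝ) (1 - 1/(k+2)) from rfl, hIoo0 _ (hbk0 k) (hbk1 k)]
    have hbtend : Tendsto (fun k : ℕ => (1:ℝ) - 1/(k+2)) atTop (𝓝[<] (1:ℝ)) := by
      apply tendsto_nhdsWithin_of_tendsto_nhds_of_eventually_within
      · have h1 : Tendsto (fun k : ℕ => (1:ℝ)/(k+2)) atTop (𝓝 0) := by
          apply Tendsto.div_atTop tendsto_const_nhds
          exact tendsto_atTop_add_const_right atTop 2 tendsto_natCast_atTop_atTop
        have h2 := (tendsto_const_nhds (x := (1:ℝ)) (f := atTop (α := ℕ))).sub h1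
        simpa using h2
      · exact Filter.Eventually.of_forall fun k => hbk1 k
    have hT2 : Tendsto (fun k => ∫ t in s k, Q t) atTop (𝓝 (α * SL)) := by
      have h3 := (htendL.comp hbtend).const_mul α
      exact Tendsto.congr (fun k => (hval k).symm) h3
    exact tendsto_nhds_unique hT hT2
  have hmean' : mMean μ' = SL * α := by
    have h1 : mMean μ' = ∫ t, Q t ∂m0 := by
      rw [hμ'def, mMean]
      exact integral_map (f := fun x : ℝ => x) hQae measurable_id.aestronglyMeasurable
    rw [h1, hfull]; ring
  have hid' : Integrable id μ' := by
    rw [hμ'def, integrable_map_measure aestronglyMeasurable_id hQae]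
    exact hQint
  have hweak : WeakCv μs μ' := by
    intro f hf hbdd
    obtain ⟨Cf, hCf⟩ := hbdd
    have hmapn : ∀ n, ∫ x, f x ∂(μs n) = ∫ t, f (quant (μs n) t) ∂m0 := by
      intro n
      haveI := hprob n
      conv_lhs => rw [← map_qf (hneg n)]
      rw [integral_map (qf_measurable (hneg n)).aemeasurable hf.aestronglyMeasurable]
      apply integral_congr_ae
      filter_upwards [quant_eq_qf_ae (μs n)] with t ht
      rw [ht]
    have hDCT : Tendsto (fun n => ∫ t, f (quant (μs n) t) ∂m0) atTop
        (𝓝 (∫ t, f (Q t) ∂m0)) := by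
      apply tendsto_integral_of_dominated_convergence (bound := fun _ => Cf)
      · exact fun n => (hf.measurable.comp_aemeasurable (Qae n)).aestronglyMeasurable
      · exact integrable_const _
      · intro n
        exact Filter.Eventually.of_forall fun t => by
          simpa [Real.norm_eq_abs] using hCf (quant (μs n) t)
      · filter_upwards [hae] with t ht using (hf.tendsto (Q t)).comp ht
    have hlast : ∫ t, f (Q t) ∂m0 = ∫ x, f x ∂μ' := by
      rw [hμ'def, integral_map hQae hf.aestronglyMeasurable]
    rw [hlast] at hDCT
    exact Tendsto.congr (fun n => (hmapn n).symm) hDCT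
  refine ⟨μ', hμ'prob, hμ'neg, hid', hweak, ?_, ?_, ?_⟩
  · rw [hleft]; rw [hmean']
  · rw [hleft]
    nlinarith
  · -- part 3
    intro hmpos' x hx
    obtain ⟨hx0, hx1⟩ := hx
    have hSLα : 0 < SL * α := by rwa [hmean'] at hmpos'
    have hαpos : 0 < α := by nlinarith
    have hSLpos : 0 < SL := by nlinarith
    rcases eq_or_lt_of_le hx0 with hxe | hx0'
    · rw [← hxe, hl0, hleft]
      have hz : lorenz μ' 0 = 0 := by rw [lorenz, intervalIntegral.integral_same, zero_div]
      rw [hz, mul_zero]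
    · have hμ'Icc : ∀ y : ℝ, μ' (Set.Icc 0 y) = volume (Q ⁻¹' Set.Icc 0 y ∩ Set.Ioo 0 1) := by
        intro y
        rw [hμ'def, Measure.map_apply_of_aemeasurable hQae measurableSet_Icc, hm0,
          Measure.restrict_apply' measurableSet_Ioo]
      have hii : ∀ p s : ℝ, 0 < p → p < s → s < 1 → quant μ' p ≤ Q s := by
        intro p s hp0 hps hs1
        apply quant_le_of_le_cdfR (hQnn s ⟨hp0.trans hps, hs1⟩)
        have h1 : Set.Ioo (0:ℝ) s ⊆ Q ⁻¹' Set.Icc 0 (Q s) ∩ Set.Ioo 0 1 := by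
          intro t ht
          have ht1 : t ∈ Set.Ioo (0:ℝ) 1 := ⟨ht.1, ht.2.trans hs1⟩
          exact ⟨⟨hQnn t ht1, hQmono ht1 ⟨hp0.trans hps, hs1⟩ ht.2.le⟩, ht1⟩
        have h2 : ENNReal.ofReal s ≤ μ' (Set.Icc 0 (Q s)) := by
          rw [hμ'Icc]
          calc ENNReal.ofReal s = volume (Set.Ioo (0:ℝ) s) := by rw [Real.volume_Ioo]; simp
            _ ≤ _ := measure_mono h1
        have h3 : s ≤ cdfR μ' (Q s) := by
          have h4 : (ENNReal.ofReal s).toReal ≤ (μ' (Set.Icc 0 (Q s))).toReal :=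
            ENNReal.toReal_mono (measure_ne_top μ' _) h2
          rwa [ENNReal.toReal_ofReal (hp0.trans hps).le] at h4
        linarith
      have hi : ∀ p t : ℝ, 0 < t → t < p → p < 1 → Q t ≤ quant μ' p := by
        intro p t ht0 htp hp1
        refine le_csInf (quant_S_nonempty hμ'neg hp1) ?_
        rintro y ⟨hy0, hpy⟩
        by_contra hc
        push_neg at hc
        have hsub : Q ⁻¹' Set.Icc 0 y ∩ Set.Ioo 0 1 ⊆ Set.Ioc 0 t := by
          rintro s' ⟨⟨_, hQs'⟩, hs'1⟩
          refine ⟨hs'1.1, ?_⟩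
          by_contra hcc
          push_neg at hcc
          have : Q t ≤ Q s' := hQmono ⟨ht0, htp.trans hp1⟩ hs'1 hcc.le
          linarith
        have h2 : μ' (Set.Icc 0 y) ≤ ENNReal.ofReal t := by
          rw [hμ'Icc]
          calc volume (Q ⁻¹' Set.Icc 0 y ∩ Set.Ioo 0 1) ≤ volume (Set.Ioc 0 t) :=
            measure_mono hsub
            _ = ENNReal.ofReal t := by rw [Real.volume_Ioc]; simp
        have h3 : cdfR μ' y ≤ t := by
          have h4 := ENNReal.toReal_mono (by simp) h2
          rwa [ENNReal.toReal_ofReal ht0.le] at h4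
        have h5 : p ≤ t := hpy.trans h3
        linarith
      set B2 : Set ℝ :=
        {p | p ∈ Set.Ioo (0:ℝ) 1 ∧ sSup (Q '' Set.Ioo 0 p) < sInf (Q '' Set.Ioo p 1)} with hB2
      have hB2c : B2.Countable := by
        apply countable_aux (f := fun p => sSup (Q '' Set.Ioo 0 p))
          (g := fun p => sInf (Q '' Set.Ioo p 1))
        · exact fun t ht => ht.2
        · rintro p ⟨⟨hp0, hp1⟩, _⟩ p' ⟨⟨hp0', hp1'⟩, _⟩ hpp'
          have hmid : (p + p')/2 ∈ Set.Ioo p p' := ⟨by linarith, by linarith⟩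
          have h1 : sInf (Q '' Set.Ioo p 1) ≤ Q ((p + p')/2) := by
            apply csInf_le
            · refine ⟨0, ?_⟩
              rintro r ⟨u, hu, rfl⟩
              exact hQnn u ⟨hp0.trans hu.1, hu.2⟩
            · exact Set.mem_image_of_mem _ ⟨hmid.1, hmid.2.trans hp1'⟩
          have h2 : Q ((p + p')/2) ≤ sSup (Q '' Set.Ioo 0 p') := by
            apply le_csSup
            · refine ⟨Q p', ?_⟩
              rintro r ⟨u, hu, rfl⟩
              exact hQmono ⟨hu.1, hu.2.trans hp1'⟩ ⟨hp0', hp1'⟩ hu.2.le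
            · exact Set.mem_image_of_mem _ ⟨by linarith [hmid.1, hp0], hmid.2⟩
          exact h1.trans h2
      have hqQ : ∀ p ∈ Set.Ioo (0:ℝ) 1, p ∉ B2 → quant μ' p = Q p := by
        rintro p ⟨hp0, hp1⟩ hpB
        have hSne : (Q '' Set.Ioo (0:ℝ) p).Nonempty :=
          ⟨Q (p/2), Set.mem_image_of_mem _ ⟨by linarith, by linarith⟩⟩
        have hIne : (Q '' Set.Ioo p 1).Nonempty :=
          ⟨Q ((p+1)/2), Set.mem_image_of_mem _ ⟨by linarith, by linarith⟩⟩
        have hge : sInf (Q '' Set.Ioo p 1) ≤ sSup (Q '' Set.Ioo 0 p) :=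
          not_lt.1 (fun hc => hpB ⟨⟨hp0, hp1⟩, hc⟩)
        have h1 : quant μ' p ≤ sInf (Q '' Set.Ioo p 1) := by
          refine le_csInf hIne ?_
          rintro r ⟨s, hs, rfl⟩
          exact hii p s hp0 hs.1 hs.2
        have h2 : sSup (Q '' Set.Ioo 0 p) ≤ quant μ' p := by
          refine csSup_le hSne ?_
          rintro r ⟨t, ht, rfl⟩
          exact hi p t ht.1 ht.2 hp1
        have h3 : Q p ≤ sInf (Q '' Set.Ioo p 1) := by
          refine le_csInf hIne ?_
          rintro r ⟨s, hs, rfl⟩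
          exact hQmono ⟨hp0, hp1⟩ ⟨hp0.trans hs.1, hs.2⟩ hs.1.le
        have h4 : sSup (Q '' Set.Ioo 0 p) ≤ Q p := by
          refine csSup_le hSne ?_
          rintro r ⟨t, ht, rfl⟩
          exact hQmono ⟨ht.1, ht.2.trans hp1⟩ ⟨hp0, hp1⟩ ht.2.le
        linarith
      have hquantae : quant μ' =ᵐ[volume.restrict (Set.Ioc 0 x)] Q := by
        have hsub2 : Set.Ioc (0:ℝ) x ⊆ Set.Ioo 0 1 := fun t ht => ⟨ht.1, lt_of_le_of_lt ht.2 hx1⟩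
        have hB20 : volume.restrict (Set.Ioc (0:ℝ) x) B2 = 0 := by
          rw [Measure.restrict_apply' measurableSet_Ioc]
          exact measure_mono_null Set.inter_subset_left (hB2c.measure_zero _)
        have h2 : ∀ᵐ t ∂(volume.restrict (Set.Ioc (0:ℝ) x)), t ∉ B2 := by
          rw [ae_iff]
          have he : {t | ¬ t ∉ B2} = B2 := by ext t; simp
          rwa [he]
        filter_upwards [h2, ae_restrict_mem measurableSet_Ioc] with t h2' ht
        exact hqQ t (hsub2 ht) h2'
      have hJ : ∫ t in (0:ℝ)..x, quant μ' t = ψ x := by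
        rw [intervalIntegral.integral_of_le hx0, integral_congr_ae hquantae,
          MeasureTheory.integral_Ioc_eq_integral_Ioo, hIoo0 x hx0' hx1]
      rw [hleft]
      have hlorx : lorenz μ' x = ψ x / (SL * α) := by rw [lorenz, hJ, hmean']
      rw [hlorx]
      have hψx : ψ x = α * ℓ x := rfl
      rw [hψx]
      field_simp

end LorenzProofAux
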